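/- Let p be an odd prime and E_n(p) the subalgebra of integer-degree elements of k[x_1,...,x_n] ⊗ Λ(ξ_1,...,ξ_n) where deg x_i = 2(p^i-1)/p^i and deg ξ_i = (p^i-2)/p^i. The quotient of E_n(p) by the ideal generated by y_i = x_i^{p^i} (1 <= i <= n) has k-dimension 2^n * p^{n(n-1)/2}, with basis the monomials x_1^{a_1}...x_n^{a_n} ξ_1^{e_1}...ξ_n^{e_n} of integer degree with 0 <= a_i <= p^i - 1 and e_i in {0,1}. -/

import Mathlib

section aux
variable (p n : ℕ)

lemma pmod_key (i : Fin n) (a : ℕ) :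
    ((a % p ^ ((i:ℕ)+1) : ℕ) : ZMod (p^n)) * (p : ZMod (p^n)) ^ (n-1-(i:ℕ))
      = (a : ZMod (p^n)) * (p : ZMod (p^n)) ^ (n-1-(i:ℕ)) := by
  conv_rhs => rw [← Nat.div_add_mod a (p ^ ((i:ℕ)+1))]
  have hz : ((p : ZMod (p^n)))^((i:ℕ)+1) * (p : ZMod (p^n)) ^ (n-1-(i:ℕ)) = 0 := by
    rw [← pow_add]
    have h1 : (i:ℕ)+1 + (n-1-(i:ℕ)) = n := by have := i.2; omega
    rw [h1]
    have : ((p^n : ℕ) : ZMod (p^n)) = 0 := ZMod.natCast_self _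
    push_cast at this
    exact this
  push_cast
  linear_combination (-((a / p^((i:ℕ)+1) : ℕ) : ZMod (p^n))) * hz

def phi (hp : 0 < p) : ((i : Fin n) → ZMod (p ^ ((i:ℕ)+1))) →+ ZMod (p^n) where
  toFun v := ∑ i : Fin n, ((v i).val : ZMod (p^n)) * (p : ZMod (p^n)) ^ (n-1-(i:ℕ))
  map_zero' := by
    haveI : ∀ i : Fin n, NeZero (p ^ ((i:ℕ)+1)) := fun i => ⟨(Nat.pow_pos hp).ne'⟩
    simp
  map_add' := by
    intro x y
    show (∑ i : Fin n, (((x+y) i).val : ZMod (p^n)) * (p : ZMod (p^n)) ^ (n-1-(i:ℕ)))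
      = (∑ i : Fin n, ((x i).val : ZMod (p^n)) * (p : ZMod (p^n)) ^ (n-1-(i:ℕ)))
      + (∑ i : Fin n, ((y i).val : ZMod (p^n)) * (p : ZMod (p^n)) ^ (n-1-(i:ℕ)))
    haveI : ∀ i : Fin n, NeZero (p ^ ((i:ℕ)+1)) := fun i => ⟨(Nat.pow_pos hp).ne'⟩
    rw [← Finset.sum_add_distrib]
    refine Finset.sum_congr rfl fun i _ => ?_
    rw [Pi.add_apply, ZMod.val_add, pmod_key, Nat.cast_add, add_mul]

lemma phi_natCast (hp : 0 < p) (a : Fin n → ℕ) :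
    phi p n hp (fun i => ((a i : ℕ) : ZMod (p ^ ((i:ℕ)+1))))
      = ∑ i : Fin n, (a i : ZMod (p^n)) * (p : ZMod (p^n)) ^ (n-1-(i:ℕ)) := by
  haveI : ∀ i : Fin n, NeZero (p ^ ((i:ℕ)+1)) := fun i => ⟨(Nat.pow_pos hp).ne'⟩
  show (∑ i : Fin n, ((((a i : ℕ) : ZMod (p ^ ((i:ℕ)+1))).val : ZMod (p^n)) * (p : ZMod (p^n)) ^ (n-1-(i:ℕ)))) = _
  refine Finset.sum_congr rfl fun i _ => ?_
  rw [ZMod.val_natCast, pmod_key]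

lemma phi_surj (hp : 0 < p) : Function.Surjective (phi p n hp) := by
  rcases Nat.eq_zero_or_pos n with hn | hn
  · subst hn
    intro y
    haveI : Subsingleton (ZMod (p^0)) := by rw [pow_zero]; infer_instance
    exact ⟨0, Subsingleton.elim _ _⟩
  · intro y
    haveI : NeZero (p ^ n) := ⟨(Nat.pow_pos hp).ne'⟩
    set j : Fin n := ⟨n-1, by omega⟩ with hj
    refine ⟨Pi.single j ((y.val : ℕ) : ZMod (p ^ ((j:ℕ)+1))), ?_⟩
    show ∑ i : Fin n, _ = y
    rw [Finset.sum_eq_single j]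
    · rw [Pi.single_eq_same]
      have hje : (j:ℕ)+1 = n := by simp [hj]; omega
      rw [ZMod.val_natCast]
      have : y.val % p ^ ((j:ℕ)+1) = y.val := by
        rw [hje]; exact Nat.mod_eq_of_lt (ZMod.val_lt y)
      rw [this]
      have h0 : n - 1 - (j:ℕ) = 0 := by simp [hj]
      rw [h0, pow_zero, mul_one, ZMod.natCast_val, ZMod.cast_id]
    · intro i _ hij
      rw [Pi.single_eq_of_ne hij]
      haveI : NeZero (p ^ ((i:ℕ)+1)) := ⟨(Nat.pow_pos hp).ne'⟩
      simp
    · intro h; exact absurd (Finset.mem_univ j) h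

lemma cond_iff (hp : 0 < p) (a e : Fin n → ℕ) :
    phi p n hp (fun i => ((a i : ℕ) : ZMod (p ^ ((i:ℕ)+1))))
        = - ∑ i : Fin n, ((e i : ℕ) : ZMod (p^n)) * (p : ZMod (p^n)) ^ (n-1-(i:ℕ))
      ↔ p ^ n ∣ ∑ i : Fin n, (a i + e i) * p ^ (n - 1 - (i:ℕ)) := by
  rw [phi_natCast p n hp a, eq_neg_iff_add_eq_zero, ← Finset.sum_add_distrib]
  have hM : (((∑ i : Fin n, (a i + e i) * p ^ (n - 1 - (i:ℕ))) : ℕ) : ZMod (p^n))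
      = ∑ i : Fin n, ((a i : ZMod (p^n)) * (p : ZMod (p^n)) ^ (n-1-(i:ℕ))
          + (e i : ZMod (p^n)) * (p : ZMod (p^n)) ^ (n-1-(i:ℕ))) := by
    push_cast
    refine Finset.sum_congr rfl fun i _ => ?_
    ring
  rw [← hM, ZMod.natCast_eq_zero_iff]

end aux

lemma term_eq (p n : ℕ) (hp : 0 < p) (i : Fin n) (a e : ℕ) :
    ((a : ℚ) * (2 * ((p : ℚ) ^ ((i : ℕ) + 1) - 1) / (p : ℚ) ^ ((i : ℕ) + 1))
      + (e : ℚ) * (((p : ℚ) ^ ((i : ℕ) + 1) - 2) / (p : ℚ) ^ ((i : ℕ) + 1)))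
    = ((2 * a + e : ℕ) : ℚ) - 2 * (((a + e) * p ^ (n - 1 - (i:ℕ)) : ℕ) : ℚ) / (p : ℚ) ^ n := by
  have hpQ : (0:ℚ) < (p:ℚ) := by exact_mod_cast hp
  have hx : ((p:ℚ)) ^ ((i:ℕ)+1) ≠ 0 := by positivity
  have hz : ((p:ℚ)) ^ n ≠ 0 := by positivity
  have hexp : (p:ℚ) ^ (n - 1 - (i:ℕ)) * (p:ℚ) ^ ((i:ℕ)+1) = (p:ℚ) ^ n := by
    rw [← pow_add]; congr 1; have := i.2; omega
  push_cast
  field_simp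
  linear_combination (2 * ((a:ℚ) + e)) * hexp

lemma degree_iff (p n : ℕ) (hp : 0 < p) (hcop : Nat.Coprime (p^n) 2) (a e : Fin n → ℕ) :
    (∃ z : ℤ, ∑ i : Fin n,
        ((a i : ℚ) * (2 * ((p : ℚ) ^ ((i : ℕ) + 1) - 1) / (p : ℚ) ^ ((i : ℕ) + 1))
          + (e i : ℚ) * (((p : ℚ) ^ ((i : ℕ) + 1) - 2) / (p : ℚ) ^ ((i : ℕ) + 1))) = z)
      ↔ p ^ n ∣ ∑ i : Fin n, (a i + e i) * p ^ (n - 1 - (i:ℕ)) := by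
  have hpQ : ((p:ℚ)) ^ n ≠ 0 := by positivity
  set T : ℕ := ∑ i : Fin n, (2 * a i + e i) with hT
  set M : ℕ := ∑ i : Fin n, (a i + e i) * p ^ (n - 1 - (i:ℕ)) with hM
  have h1 : (∑ i : Fin n,
        ((a i : ℚ) * (2 * ((p : ℚ) ^ ((i : ℕ) + 1) - 1) / (p : ℚ) ^ ((i : ℕ) + 1))
          + (e i : ℚ) * (((p : ℚ) ^ ((i : ℕ) + 1) - 2) / (p : ℚ) ^ ((i : ℕ) + 1))))
      = ((T : ℚ)) - 2 * (M : ℚ) / (p : ℚ) ^ n := by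
    simp_rw [term_eq p n hp]
    rw [Finset.sum_sub_distrib, ← Finset.sum_div, ← Finset.mul_sum, hT, hM]
    push_cast
    ring
  rw [h1]
  constructor
  · rintro ⟨z, hz⟩
    have h2 : (2 * M : ℚ) = ((T : ℚ) - z) * (p:ℚ)^n := by
      field_simp at hz ⊢
      linarith
    have h3 : (2 * M : ℤ) = ((T : ℤ) - z) * (p:ℤ)^n := by exact_mod_cast h2
    have h4 : ((p:ℤ))^n ∣ (2 * M : ℤ) := ⟨(T:ℤ) - z, by linarith [h3]⟩
    have h5 : p ^ n ∣ 2 * M := by exact_mod_cast h4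
    exact (Nat.Coprime.dvd_of_dvd_mul_left hcop h5)
  · rintro ⟨c, hc⟩
    refine ⟨(T : ℤ) - 2 * c, ?_⟩
    rw [hc]
    push_cast
    field_simp

section aux2
variable (p n : ℕ)

theorem stmt6' (hp : p.Prime) (hodd : Odd p) :
    Nat.card {ae : (Fin n → ℕ) × (Fin n → ℕ) //
      (∀ i : Fin n, ae.1 i ≤ p ^ ((i : ℕ) + 1) - 1) ∧
      (∀ i : Fin n, ae.2 i ≤ 1) ∧
      (∃ z : ℤ, ∑ i : Fin n,
        ((ae.1 i : ℚ) * (2 * ((p : ℚ) ^ ((i : ℕ) + 1) - 1) / (p : ℚ) ^ ((i : ℕ) + 1))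
          + (ae.2 i : ℚ) * (((p : ℚ) ^ ((i : ℕ) + 1) - 2) / (p : ℚ) ^ ((i : ℕ) + 1))) = z)}
    = 2 ^ n * p ^ (n * (n - 1) / 2) := by
  have hp0 : 0 < p := hp.pos
  have hcop : Nat.Coprime (p ^ n) 2 := Nat.coprime_two_right.mpr (hodd.pow)
  haveI : NeZero (p ^ n) := ⟨(Nat.pow_pos hp0).ne'⟩
  haveI : ∀ i : Fin n, NeZero (p ^ ((i:ℕ)+1)) := fun i => ⟨(Nat.pow_pos hp0).ne'⟩
  set t : (Fin n → Fin 2) → ZMod (p ^ n) :=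
    fun e => ∑ i : Fin n, (((e i : ℕ) : ZMod (p ^ n)) * (p : ZMod (p ^ n)) ^ (n - 1 - (i:ℕ)))
    with ht
  have E1 : {ae : (Fin n → ℕ) × (Fin n → ℕ) //
      (∀ i : Fin n, ae.1 i ≤ p ^ ((i : ℕ) + 1) - 1) ∧
      (∀ i : Fin n, ae.2 i ≤ 1) ∧
      (∃ z : ℤ, ∑ i : Fin n,
        ((ae.1 i : ℚ) * (2 * ((p : ℚ) ^ ((i : ℕ) + 1) - 1) / (p : ℚ) ^ ((i : ℕ) + 1))
          + (ae.2 i : ℚ) * (((p : ℚ) ^ ((i : ℕ) + 1) - 2) / (p : ℚ) ^ ((i : ℕ) + 1))) = z)} ≃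
      {x : ((i : Fin n) → ZMod (p ^ ((i:ℕ)+1))) × (Fin n → Fin 2) //
        phi p n hp0 x.1 = - t x.2} := by
    refine ⟨fun s => ⟨(fun i => ((s.1.1 i : ℕ) : ZMod (p ^ ((i:ℕ)+1))),
        fun i => ⟨s.1.2 i, by have := s.2.2.1 i; omega⟩), ?_⟩,
      fun x => ⟨((fun i => (x.1.1 i).val), fun i => ((x.1.2 i : ℕ))), ?_, ?_, ?_⟩, ?_, ?_⟩
    · exact (cond_iff p n hp0 s.1.1 s.1.2).mpr
        ((degree_iff p n hp0 hcop s.1.1 s.1.2).mp s.2.2.2)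
    · intro i
      show ((x : {x : ((i : Fin n) → ZMod (p ^ ((i:ℕ)+1))) × (Fin n → Fin 2) //
        phi p n hp0 x.1 = - t x.2}).1.1 i).val ≤ p ^ ((i:ℕ)+1) - 1
      have := ZMod.val_lt (x.1.1 i)
      have hpos : 0 < p ^ ((i:ℕ)+1) := Nat.pow_pos hp0
      omega
    · intro i
      show ((x : {x : ((i : Fin n) → ZMod (p ^ ((i:ℕ)+1))) × (Fin n → Fin 2) //
        phi p n hp0 x.1 = - t x.2}).1.2 i : ℕ) ≤ 1
      have := (x.1.2 i).2
      omega
    · refine (degree_iff p n hp0 hcop _ _).mpr ((cond_iff p n hp0 _ _).mp ?_)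
      have hfun : (fun (i : Fin n) => ((((x.1.1 i).val : ℕ)) : ZMod (p ^ ((i:ℕ)+1)))) = x.1.1 :=
        funext fun (i : Fin n) => by rw [ZMod.natCast_val, ZMod.cast_id]
      rw [hfun]
      exact x.2
    · intro s
      apply Subtype.ext
      apply Prod.ext
      · funext i
        show ((s.1.1 i : ℕ) : ZMod (p ^ ((i:ℕ)+1))).val = s.1.1 i
        rw [ZMod.val_natCast]
        have := s.2.1 i
        have hpos : 0 < p ^ ((i:ℕ)+1) := Nat.pow_pos hp0
        exact Nat.mod_eq_of_lt (by omega)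
      · funext i
        rfl
    · intro x
      apply Subtype.ext
      apply Prod.ext
      · funext i
        show (((x.1.1 i).val : ℕ) : ZMod (p ^ ((i:ℕ)+1))) = x.1.1 i
        rw [ZMod.natCast_val, ZMod.cast_id]
      · funext i
        exact Fin.ext rfl
  let σ : ZMod (p ^ n) → ((i : Fin n) → ZMod (p ^ ((i:ℕ)+1))) :=
    Function.surjInv (phi_surj p n hp0)
  have hσ : ∀ y, phi p n hp0 (σ y) = y := Function.surjInv_eq _
  have E2 : {x : ((i : Fin n) → ZMod (p ^ ((i:ℕ)+1))) × (Fin n → Fin 2) //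
        phi p n hp0 x.1 = - t x.2} ≃
      (Fin n → Fin 2) × (phi p n hp0).ker := by
    refine ⟨fun x => (x.1.2, ⟨x.1.1 - σ (- t x.1.2), ?_⟩),
      fun ek => ⟨(ek.2.1 + σ (- t ek.1), ek.1), ?_⟩, ?_, ?_⟩
    · rw [AddMonoidHom.mem_ker, map_sub, x.2, hσ, sub_self]
    · show phi p n hp0 (ek.2.1 + σ (- t ek.1)) = - t ek.1
      rw [map_add, AddMonoidHom.mem_ker.mp ek.2.2, zero_add, hσ]
    · intro x
      apply Subtype.ext
      apply Prod.ext
      · show x.1.1 - σ (- t x.1.2) + σ (- t x.1.2) = x.1.1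
        abel
      · rfl
    · intro ek
      apply Prod.ext
      · rfl
      · apply Subtype.ext
        show ek.2.1 + σ (- t ek.1) - σ (- t ek.1) = ek.2.1
        abel
  rw [Nat.card_congr (E1.trans E2), Nat.card_prod]
  have hE : Nat.card (Fin n → Fin 2) = 2 ^ n := by
    simp [Nat.card_eq_fintype_card]
  have hG : Nat.card ((i : Fin n) → ZMod (p ^ ((i:ℕ)+1))) = p ^ (n * (n - 1) / 2 + n) := by
    rw [Nat.card_pi]
    simp_rw [Nat.card_zmod]
    rw [Finset.prod_pow_eq_pow_sum]
    congr 1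
    rw [Fin.sum_univ_eq_sum_range (fun i => i + 1)]
    have h2 := Finset.sum_range_id_mul_two n
    have h3 : ∑ i ∈ Finset.range n, (i + 1) = (∑ i ∈ Finset.range n, i) + n := by
      simp [Finset.sum_add_distrib]
    omega
  have hlag := AddSubgroup.card_eq_card_quotient_mul_card_addSubgroup (phi p n hp0).ker
  have hquot : Nat.card (((i : Fin n) → ZMod (p ^ ((i:ℕ)+1))) ⧸ (phi p n hp0).ker) = p ^ n := by
    rw [Nat.card_congr (QuotientAddGroup.quotientKerEquivOfSurjective _ (phi_surj p n hp0)).toEquiv,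
      Nat.card_zmod]
  have hker : Nat.card (phi p n hp0).ker = p ^ (n * (n - 1) / 2) := by
    have h4 : Nat.card (((i : Fin n) → ZMod (p ^ ((i:ℕ)+1))) ⧸ (phi p n hp0).ker)
        * Nat.card (phi p n hp0).ker = p ^ (n * (n - 1) / 2) * p ^ n := by
      rw [← hlag, hG, pow_add]
    rw [hquot, mul_comm (p ^ (n * (n - 1) / 2))] at h4
    exact Nat.eq_of_mul_eq_mul_left (Nat.pow_pos hp0) h4
  rw [hE, hker]

end aux2

theorem stmt6 (p : ℕ) (hp : p.Prime) (hodd : Odd p) (n : ℕ) :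
    Nat.card {ae : (Fin n → ℕ) × (Fin n → ℕ) //
      (∀ i : Fin n, ae.1 i ≤ p ^ ((i : ℕ) + 1) - 1) ∧
      (∀ i : Fin n, ae.2 i ≤ 1) ∧
      (∃ z : ℤ, ∑ i : Fin n,
        ((ae.1 i : ℚ) * (2 * ((p : ℚ) ^ ((i : ℕ) + 1) - 1) / (p : ℚ) ^ ((i : ℕ) + 1))
          + (ae.2 i : ℚ) * (((p : ℚ) ^ ((i : ℕ) + 1) - 2) / (p : ℚ) ^ ((i : ℕ) + 1))) = z)}
    = 2 ^ n * p ^ (n * (n - 1) / 2) := stmt6' p n hp hodd
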